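/- Let n ≥ 1 and let b_1 ≥ ... ≥ b_n be integers with b_i - b_{i+1} ≤ 1 for all i (no gap) and Σ b_i = c with 0 ≤ c ≤ n/2. If n is even then Σ_{i=1}^n b_i² ≤ c² + 2·Σ_{i=1}^{(n-2)/2} i², and if n is odd then Σ_{i=1}^n b_i² ≤ (c - (n-1)/2)² + Σ_{i=-(n-3)/2}^{(n-1)/2} i². -/

import Mathlib

open Finset

private def Bf (M : ℤ) (p : ℕ) (i : ℕ) : ℤ := M - (i : ℤ) + (if p < i then 1 else 0)



private lemma gsum (k : ℕ) : 2 * ∑ i ∈ range k, (i : ℤ) = k * (k - 1) := by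
  induction k with
  | zero => simp
  | succ k ih =>
    rw [sum_range_succ, mul_add]
    push_cast
    push_cast at ih
    linarith [ih]

private lemma qsum (k : ℕ) : 6 * ∑ i ∈ range k, (i : ℤ)^2 = k * (k - 1) * (2 * k - 1) := by
  induction k with
  | zero => simp
  | succ k ih =>
    rw [sum_range_succ, mul_add]
    push_cast
    push_cast at ih
    nlinarith [ih]

private lemma ifsum (p k : ℕ) (f : ℕ → ℤ) :
    ∑ i ∈ range k, (if p < i then f i else 0) + ∑ i ∈ range (min k (p+1)), f i
      = ∑ i ∈ range k, f i := by
  induction k with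
  | zero => simp
  | succ k ih =>
    rcases le_or_gt (k+1) (p+1) with h | h
    · have h1 : min (k+1) (p+1) = k + 1 := by omega
      have h2 : min k (p+1) = k := by omega
      rw [h1, sum_range_succ (fun i => if p < i then f i else 0) k, if_neg (by omega),
        sum_range_succ f k]
      rw [h2] at ih
      linarith [ih]
    · have h1 : min (k+1) (p+1) = p + 1 := by omega
      have h2 : min k (p+1) = p + 1 := by omega
      rw [h1, sum_range_succ (fun i => if p < i then f i else 0) k, if_pos (by omega),
        sum_range_succ f k]
      rw [h2] at ih
      linarith [ih]

private lemma indsum_le (p k : ℕ) (h : k ≤ p + 1) :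
    ∑ i ∈ range k, (if p < i then (1:ℤ) else 0) = 0 :=
  sum_eq_zero fun i hi => if_neg (by rw [mem_range] at hi; omega)

private lemma indsum_gt (p k : ℕ) (h : p + 1 ≤ k) :
    ∑ i ∈ range k, (if p < i then (1:ℤ) else 0) = (k : ℤ) - 1 - p := by
  have := ifsum p k (fun _ => (1:ℤ))
  rw [min_eq_right h] at this
  simp only [sum_const, card_range, nsmul_eq_mul, mul_one] at this
  push_cast at this ⊢
  linarith

private lemma divu (n M M' r r' : ℤ) (hn : 0 < n) (h : n*M + r = n*M' + r')
    (hr : 0 ≤ r) (hr2 : r < n) (hr' : 0 ≤ r') (hr2' : r' < n) : M = M' ∧ r = r' := by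
  have hM : M = M' := by
    rcases lt_trichotomy M M' with h1 | h1 | h1
    · exfalso
      have h2 : M + 1 ≤ M' := h1
      have h3 : n * (M + 1) ≤ n * M' := mul_le_mul_of_nonneg_left h2 hn.le
      nlinarith
    · exact h1
    · exfalso
      have h2 : M' + 1 ≤ M := h1
      have h3 : n * (M' + 1) ≤ n * M := mul_le_mul_of_nonneg_left h2 hn.le
      nlinarith
  exact ⟨hM, by rw [hM] at h; linarith⟩

private lemma icc1 (m : ℕ) :
    ∑ i ∈ Icc (1:ℤ) (m:ℤ), i^2 = ∑ i ∈ range (m+1), (i:ℤ)^2 := by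
  induction m with
  | zero => simp
  | succ m ih =>
    have h1 : Icc (1:ℤ) ((m:ℤ)+1) = insert ((m:ℤ)+1) (Icc (1:ℤ) (m:ℤ)) := by
      ext x; simp only [mem_Icc, mem_insert]; omega
    have h2 : ((m:ℤ)+1) ∉ Icc (1:ℤ) (m:ℤ) := by simp
    push_cast
    rw [h1, sum_insert h2, sum_range_succ, ih]
    push_cast
    ring

private lemma iccneg (A B : ℕ) :
    ∑ i ∈ Icc (-(A:ℤ)) (B:ℤ), i^2
      = ∑ i ∈ range (A+1), (i:ℤ)^2 + ∑ i ∈ range (B+1), (i:ℤ)^2 := by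
  induction A with
  | zero =>
    simp only [Nat.cast_zero, neg_zero]
    have h1 : Icc (0:ℤ) (B:ℤ) = insert (0:ℤ) (Icc (1:ℤ) (B:ℤ)) := by
      ext x; simp only [mem_Icc, mem_insert]; omega
    have h2 : (0:ℤ) ∉ Icc (1:ℤ) (B:ℤ) := by simp
    rw [h1, sum_insert h2, icc1]
    simp
  | succ A ih =>
    have h1 : Icc (-((A:ℤ)+1)) (B:ℤ) = insert (-((A:ℤ)+1)) (Icc (-(A:ℤ)) (B:ℤ)) := by
      ext x; simp only [mem_Icc, mem_insert]; omega
    have h2 : (-((A:ℤ)+1)) ∉ Icc (-(A:ℤ)) (B:ℤ) := by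
      simp only [mem_Icc]; omega
    rw [show (-(((A+1:ℕ)):ℤ)) = -((A:ℤ)+1) by push_cast; ring, h1, sum_insert h2, ih,
      sum_range_succ (fun i => ((i:ℕ):ℤ)^2) (A+1)]
    push_cast
    ring

private lemma abel_nonneg (n : ℕ) (d s : ℕ → ℤ)
    (hD : ∀ k, k ≤ n → 0 ≤ ∑ i ∈ range k, d i)
    (h0 : ∑ i ∈ range n, d i = 0)
    (hs : ∀ i, i + 1 < n → s (i+1) ≤ s i) :
    0 ≤ ∑ i ∈ range n, d i * s i := by
  have hcomm : ∑ i ∈ range n, d i * s i = ∑ i ∈ range n, s i • d i := by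
    apply sum_congr rfl; intro i _; simp [mul_comm]
  rw [hcomm, Finset.sum_range_by_parts]
  rw [h0]
  simp only [smul_eq_mul, mul_zero, zero_sub]
  rw [← Finset.sum_neg_distrib]
  apply Finset.sum_nonneg
  intro i hi
  rw [mem_range] at hi
  have h1 : 0 ≤ s i - s (i+1) := sub_nonneg.mpr (hs i (by omega))
  have h2 : 0 ≤ ∑ j ∈ range (i+1), d j := hD (i+1) (by omega)
  have : -((s (i+1) - s i) * ∑ j ∈ range (i+1), d j)
      = (s i - s (i+1)) * ∑ j ∈ range (i+1), d j := by ring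
  rw [this]
  exact mul_nonneg h1 h2

private lemma karamata_sq (n : ℕ) (a B : ℕ → ℤ)
    (hmaj : ∀ k, k ≤ n → ∑ i ∈ range k, a i ≤ ∑ i ∈ range k, B i)
    (heq : ∑ i ∈ range n, a i = ∑ i ∈ range n, B i)
    (hs : ∀ i, i + 1 < n → B (i+1) + a (i+1) ≤ B i + a i) :
    ∑ i ∈ range n, (a i)^2 ≤ ∑ i ∈ range n, (B i)^2 := by
  have key : 0 ≤ ∑ i ∈ range n, (B i - a i) * (B i + a i) := by
    apply abel_nonneg n (fun i => B i - a i) (fun i => B i + a i)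
    · intro k hk
      have := hmaj k hk
      rw [Finset.sum_sub_distrib]
      linarith
    · rw [Finset.sum_sub_distrib]; linarith
    · exact hs
  have expand : ∑ i ∈ range n, (B i - a i) * (B i + a i)
      = ∑ i ∈ range n, (B i)^2 - ∑ i ∈ range n, (a i)^2 := by
    rw [← Finset.sum_sub_distrib]
    apply sum_congr rfl; intro i _; ring
  linarith [key, expand ▸ key]

private lemma Bf_anti (M : ℤ) (p i : ℕ) : Bf M p (i+1) ≤ Bf M p i := by
  unfold Bf
  by_cases h1 : p < i
  · rw [if_pos h1, if_pos (by omega)]; push_cast; linarith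
  · rw [if_neg h1]
    by_cases h2 : p < i + 1
    · rw [if_pos h2]; push_cast; linarith
    · rw [if_neg h2]; push_cast; linarith

private lemma Bf_sum (M : ℤ) (p k : ℕ) :
    ∑ i ∈ range k, Bf M p i
      = (k:ℤ) * M - (∑ i ∈ range k, (i:ℤ)) + ∑ i ∈ range k, (if p < i then (1:ℤ) else 0) := by
  unfold Bf
  rw [Finset.sum_add_distrib, Finset.sum_sub_distrib, sum_const, card_range, nsmul_eq_mul]

private lemma Bf_sq_sum (M : ℤ) (p n : ℕ) (hpn : p + 1 ≤ n) :
    ∑ i ∈ range n, (Bf M p i)^2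
      = ((n:ℤ) * M^2 - 2*M*(∑ i ∈ range n, (i:ℤ)) + ∑ i ∈ range n, (i:ℤ)^2)
        + ((2*(n:ℤ)*M + (n:ℤ) - 2*(∑ i ∈ range n, (i:ℤ)))
           - (2*((p:ℤ)+1)*M + ((p:ℤ)+1) - 2*(∑ i ∈ range (p+1), (i:ℤ)))) := by
  have step1 : ∀ i ∈ range n,
      (Bf M p i)^2 = (M - (i:ℤ))^2 + (if p < i then 2*(M-(i:ℤ))+1 else 0) := by
    intro i _; unfold Bf; split <;> ring
  rw [sum_congr rfl step1, Finset.sum_add_distrib]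
  have h2 := ifsum p n (fun i => 2*(M-(i:ℤ))+1)
  rw [min_eq_right hpn] at h2
  have e1 : ∑ i ∈ range n, (M - (i:ℤ))^2
      = (n:ℤ)*M^2 - 2*M*(∑ i ∈ range n, (i:ℤ)) + ∑ i ∈ range n, (i:ℤ)^2 := by
    have h3 : ∀ i ∈ range n, (M-(i:ℤ))^2 = M^2 - 2*M*(i:ℤ) + (i:ℤ)^2 := fun i _ => by ring
    rw [sum_congr rfl h3, Finset.sum_add_distrib, Finset.sum_sub_distrib, sum_const,
      card_range, nsmul_eq_mul, ← Finset.mul_sum]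
  have e2 : ∀ k : ℕ, ∑ i ∈ range k, (2*(M-(i:ℤ))+1)
      = 2*(k:ℤ)*M + (k:ℤ) - 2*(∑ i ∈ range k, (i:ℤ)) := by
    intro k
    have h4 : ∀ i ∈ range k, 2*(M-(i:ℤ))+1 = (2*M+1) - 2*(i:ℤ) := fun i _ => by ring
    rw [sum_congr rfl h4, Finset.sum_sub_distrib, sum_const, card_range, nsmul_eq_mul,
      ← Finset.mul_sum]
    ring
  rw [e1]
  have := e2 n
  have := e2 (p+1)
  push_cast at this ⊢
  linarith [h2, e2 n, e2 (p+1)]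

theorem stmt_15 (n : ℕ) (hn : 0 < n) (b : Fin n → ℤ) (hb : Antitone b)
    (hgap : ∀ i : Fin n, ∀ j : Fin n, (j : ℕ) = (i : ℕ) + 1 → b i - b j ≤ 1)
    (c : ℤ) (hc : c = ∑ i : Fin n, b i) (hc0 : 0 ≤ c) (hcn : 2 * c ≤ (n : ℤ)) :
    (Even n →
      ∑ i : Fin n, (b i) ^ 2 ≤
        c ^ 2 + 2 * ∑ i ∈ Finset.Icc (1 : ℤ) (((n : ℤ) - 2) / 2), i ^ 2) ∧
    (Odd n →
      ∑ i : Fin n, (b i) ^ 2 ≤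
        (c - ((n : ℤ) - 1) / 2) ^ 2 +
          ∑ i ∈ Finset.Icc (-(((n : ℤ) - 3) / 2)) (((n : ℤ) - 1) / 2), i ^ 2) := by
  classical
  set a : ℕ → ℤ := fun i => if h : i < n then b ⟨i, h⟩ else 0 with ha
  have haa : ∀ (i : ℕ) (h : i < n), a i = b ⟨i, h⟩ := by
    intro i h; simp only [ha, dif_pos h]
  have hkey : ∀ i : Fin n, a (i : ℕ) = b i := by
    intro i; rw [haa _ i.isLt]
  have hsum_a : ∑ i ∈ range n, a i = c := by
    rw [hc, ← Fin.sum_univ_eq_sum_range a n]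
    exact sum_congr rfl fun i _ => hkey i
  have hsq_a : ∑ i ∈ range n, (a i)^2 = ∑ i : Fin n, (b i)^2 := by
    rw [← Fin.sum_univ_eq_sum_range (fun i => (a i)^2) n]
    exact sum_congr rfl fun i _ => by rw [hkey i]
  have htel : ∀ (i d : ℕ), i + d < n → a i - a (i + d) ≤ (d : ℤ) := by
    intro i d
    induction d with
    | zero => intro _; simp
    | succ d ih =>
      intro h
      have h1 : i + d < n := by omega
      have h2 := ih h1
      have h3 : b ⟨i + d, h1⟩ - b ⟨i + d + 1, by omega⟩ ≤ 1 :=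
        hgap ⟨i + d, h1⟩ ⟨i + d + 1, by omega⟩ rfl
      rw [haa (i+d) h1] at h2
      have h4 : a (i + (d+1)) = b ⟨i + d + 1, by omega⟩ := haa (i + d + 1) (by omega)
      rw [h4]
      push_cast
      linarith
  have htel' : ∀ i j : ℕ, i ≤ j → j < n → a i - a j ≤ (j : ℤ) - (i : ℤ) := by
    intro i j hij hj
    have := htel i (j - i) (by omega)
    rw [show i + (j - i) = j by omega] at this
    have : a i - a j ≤ ((j - i : ℕ) : ℤ) := this
    omega
  have hanti : ∀ i j : ℕ, i ≤ j → j < n → a j ≤ a i := by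
    intro i j hij hj
    rw [haa i (by omega), haa j hj]
    exact hb (by exact Fin.mk_le_mk.mpr hij)
  set G : ℕ → ℤ := fun k => ∑ i ∈ range k, (i:ℤ) with hG
  set Q : ℕ → ℤ := fun k => ∑ i ∈ range k, (i:ℤ)^2 with hQ
  set S : ℤ := c + G n with hSdef
  set M : ℤ := S / (n:ℤ) with hM
  set r : ℤ := S % (n:ℤ) with hr
  have hnz : (n:ℤ) ≠ 0 := by exact_mod_cast hn.ne'
  have hnpos : (0:ℤ) < n := by exact_mod_cast hn
  have hS : (n:ℤ) * M + r = S := Int.mul_ediv_add_emod S n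
  have hr0 : 0 ≤ r := Int.emod_nonneg S hnz
  have hrn : r < (n:ℤ) := Int.emod_lt_of_pos S hnpos
  set p : ℕ := n - 1 - r.toNat with hpdef
  have hp : (p:ℤ) = (n:ℤ) - 1 - r := by omega
  have hpn : p + 1 ≤ n := by omega
  have hBn : ∑ i ∈ range n, Bf M p i = c := by
    rw [Bf_sum, indsum_gt p n hpn]
    have : (∑ i ∈ range n, (i:ℤ)) = G n := rfl
    rw [this, hp]
    linarith [hS]
  have hmaj : ∀ k, k ≤ n → ∑ i ∈ range k, a i ≤ ∑ i ∈ range k, Bf M p i := by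
    intro k hk
    rcases Nat.eq_zero_or_pos k with rfl | hk0
    · simp
    rcases eq_or_lt_of_le hk with rfl | hkn
    · exact le_of_eq (hsum_a.trans hBn.symm)
    have h1 : ∑ i ∈ range k, a i ≤ (k:ℤ) * a k + ((k:ℤ)*(k:ℤ) - G k) := by
      calc ∑ i ∈ range k, a i ≤ ∑ i ∈ range k, (a k + ((k:ℤ) - (i:ℤ))) := by
            apply sum_le_sum; intro i hi; rw [mem_range] at hi
            have := htel' i k (le_of_lt hi) hkn
            linarith
        _ = (k:ℤ) * a k + ((k:ℤ)*(k:ℤ) - G k) := by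
            rw [Finset.sum_add_distrib, Finset.sum_sub_distrib, sum_const, card_range,
              sum_const, card_range, nsmul_eq_mul, nsmul_eq_mul]
            try ring
    have h2 : ∑ i ∈ range k, a i
        ≤ c - (((n:ℤ) - k) * a k - ((G n - G k) - ((n:ℤ)-(k:ℤ))*(k:ℤ))) := by
      have ht : ∑ i ∈ Ico k n, (a k - ((i:ℤ) - (k:ℤ))) ≤ ∑ i ∈ Ico k n, a i := by
        apply sum_le_sum; intro i hi; rw [mem_Ico] at hi
        have := htel' k i hi.1 hi.2
        linarith
      have hsplit : ∑ i ∈ range k, a i + ∑ i ∈ Ico k n, a i = ∑ i ∈ range n, a i := by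
        rw [range_eq_Ico, range_eq_Ico]
        exact sum_Ico_consecutive _ (Nat.zero_le k) (le_of_lt hkn)
      have hico : ∑ i ∈ Ico k n, (i:ℤ) = G n - G k := by
        rw [hG]
        exact Finset.sum_Ico_eq_sub _ (le_of_lt hkn)
      have hcard : ((Ico k n).card : ℤ) = (n:ℤ) - k := by
        rw [Nat.card_Ico]; omega
      have hval : ∑ i ∈ Ico k n, (a k - ((i:ℤ) - (k:ℤ)))
          = ((n:ℤ)-k) * a k - ((G n - G k) - ((n:ℤ)-(k:ℤ))*(k:ℤ)) := by
        rw [Finset.sum_sub_distrib, Finset.sum_sub_distrib, sum_const, sum_const, hico,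
          nsmul_eq_mul, nsmul_eq_mul, hcard]
        try ring
      linarith [hsum_a, hsplit, ht, hval]
    rw [Bf_sum]
    have hGk : (∑ i ∈ range k, (i:ℤ)) = G k := rfl
    rw [hGk]
    have hc' : c = (n:ℤ)*M + r - G n := by linarith [hS]
    rcases le_or_gt (p+1) k with hpk | hpk
    · rw [indsum_gt p k hpk]
      have hpk' : (p:ℤ) + 1 ≤ (k:ℤ) := by exact_mod_cast hpk
      rcases le_or_gt (M - (k:ℤ) + 1) (a k) with hxx | hxx
      · have hprod : ((n:ℤ)-(k:ℤ))*(M - (k:ℤ) + 1) ≤ ((n:ℤ)-(k:ℤ)) * a k :=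
          mul_le_mul_of_nonneg_left hxx (by push_cast; omega)
        have hexp : ((n:ℤ)-(k:ℤ))*(M-(k:ℤ)+1)
            = (n:ℤ)*M - (n:ℤ)*(k:ℤ) + (n:ℤ) - (k:ℤ)*M + (k:ℤ)*(k:ℤ) - (k:ℤ) := by ring
        linarith [h2, hprod, hexp, hp]
      · have hxk : a k ≤ M - (k:ℤ) := by linarith
        have hprod : (k:ℤ) * a k ≤ (k:ℤ) * (M - (k:ℤ)) :=
          mul_le_mul_of_nonneg_left hxk (by positivity)
        have hexp : (k:ℤ)*(M - (k:ℤ)) = (k:ℤ)*M - (k:ℤ)*(k:ℤ) := by ring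
        linarith [h1, hprod]
    · rw [indsum_le p k (by omega)]
      have hkp : (k:ℤ) ≤ (p:ℤ) := by exact_mod_cast Nat.lt_succ_iff.mp hpk
      rcases le_or_gt (a k) (M - (k:ℤ)) with hxx | hxx
      · have hprod : (k:ℤ) * a k ≤ (k:ℤ) * (M - (k:ℤ)) :=
          mul_le_mul_of_nonneg_left hxx (by positivity)
        have hexp : (k:ℤ)*(M - (k:ℤ)) = (k:ℤ)*M - (k:ℤ)*(k:ℤ) := by ring
        linarith [h1, hprod]
      · have hxx' : M - (k:ℤ) + 1 ≤ a k := by linarith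
        have hprod : ((n:ℤ)-(k:ℤ))*(M - (k:ℤ) + 1) ≤ ((n:ℤ)-(k:ℤ)) * a k :=
          mul_le_mul_of_nonneg_left hxx' (by push_cast; omega)
        have hexp : ((n:ℤ)-(k:ℤ))*(M-(k:ℤ)+1)
            = (n:ℤ)*M - (n:ℤ)*(k:ℤ) + (n:ℤ) - (k:ℤ)*M + (k:ℤ)*(k:ℤ) - (k:ℤ) := by ring
        linarith [h2, hprod, hp]
  have hkar : ∑ i ∈ range n, (a i)^2 ≤ ∑ i ∈ range n, (Bf M p i)^2 := by
    apply karamata_sq n a (Bf M p) hmaj (hsum_a.trans hBn.symm)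
    intro i hi
    have h1 := Bf_anti M p i
    have h2 := hanti i (i+1) (by omega) hi
    linarith
  have hmain : ∑ i : Fin n, (b i)^2 ≤ ∑ i ∈ range n, (Bf M p i)^2 := by
    rw [← hsq_a]; exact hkar
  have hBsq := Bf_sq_sum M p n hpn
  constructor
  · intro hev
    obtain ⟨m, hm⟩ : ∃ m : ℕ, n = 2*m + 2 := by
      rcases hev with ⟨t, ht⟩; exact ⟨t - 1, by omega⟩
    have hn' : (n:ℤ) = 2*(m:ℤ) + 2 := by omega
    have hfold1 : (∑ i ∈ range n, (i:ℤ)) = G n := rfl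
    have hfold2 : (∑ i ∈ range n, (i:ℤ)^2) = Q n := rfl
    have hfold3 : (∑ i ∈ range (p+1), (i:ℤ)) = G (p+1) := rfl
    have hfold4 : (∑ i ∈ range (m+1), (i:ℤ)^2) = Q (m+1) := rfl
    rw [hfold1, hfold2, hfold3] at hBsq
    have hGn : G n = 2*(m:ℤ)^2 + 3*(m:ℤ) + 1 := by
      have h := gsum n; rw [hfold1, hn'] at h; linarith
    have hQn : 6 * Q n = (2*(m:ℤ)+2) * (2*(m:ℤ)+1) * (4*(m:ℤ)+3) := by
      have h := qsum n; rw [hfold2, hn'] at h; linarith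
    have hQm : 6 * Q (m+1) = ((m:ℤ)+1) * (m:ℤ) * (2*(m:ℤ)+1) := by
      have h := qsum (m+1); rw [hfold4] at h; push_cast at h; linarith
    have hrhs : (((n:ℤ) - 2) / 2) = (m:ℤ) := by rw [hn']; omega
    rw [hrhs, icc1 m, hfold4]
    refine le_trans hmain ?_
    rw [hBsq]
    rcases lt_or_eq_of_le (show c ≤ (m:ℤ)+1 by omega) with hlt | heq2
    · have hcm' : c ≤ (m:ℤ) := by omega
      obtain ⟨hMm, hrr⟩ := divu (n:ℤ) M (m:ℤ) r (c + (m:ℤ) + 1) hnpos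
        (by rw [hS, hSdef, hGn, hn']; ring) hr0 hrn (by omega) (by rw [hn']; omega)
      have hpz : (p:ℤ) = (m:ℤ) - c := by rw [hp, hn', hrr]; ring
      have hgp : 2 * G (p+1) = ((m:ℤ)-c+1) * ((m:ℤ)-c) := by
        have h := gsum (p+1); rw [hfold3] at h; push_cast at h; rw [hpz] at h; linarith
      rw [hMm, hpz, hn', hGn]
      linarith [hQn, hQm, hgp]
    · obtain ⟨hMm, hrr⟩ := divu (n:ℤ) M ((m:ℤ)+1) r 0 hnpos
        (by rw [hS, hSdef, hGn, hn']; linarith) hr0 hrn le_rfl (by rw [hn']; omega)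
      have hpz : (p:ℤ) = 2*(m:ℤ) + 1 := by rw [hp, hn', hrr]; ring
      have hgp : 2 * G (p+1) = (2*(m:ℤ)+2) * (2*(m:ℤ)+1) := by
        have h := gsum (p+1); rw [hfold3] at h; push_cast at h; rw [hpz] at h; linarith
      rw [hMm, hpz, hn', hGn, heq2]
      linarith [hQn, hQm, hgp]
  · intro hodd
    obtain ⟨t, hm⟩ : ∃ t : ℕ, n = 2*t + 1 := by
      rcases hodd with ⟨u, hu⟩; exact ⟨u, by omega⟩
    rcases Nat.eq_zero_or_pos t with rfl | ht0
    · have hm1 : n = 1 := by omega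
      subst hm1
      have hc00 : c = 0 := by
        have : (2:ℤ) * c ≤ 1 := by exact_mod_cast hcn
        omega
      rw [Fin.sum_univ_one] at hc
      rw [show (∑ i : Fin 1, (b i)^2) = (b 0)^2 from Fin.sum_univ_one _]
      have he : Finset.Icc (-((((1:ℕ):ℤ) - 3) / 2)) ((((1:ℕ):ℤ) - 1) / 2) = ∅ := by
        rw [show ((((1:ℕ):ℤ) - 3) / 2) = -1 by norm_num, show ((((1:ℕ):ℤ) - 1) / 2) = 0 by norm_num]
        exact Finset.Icc_eq_empty (by norm_num)
      rw [he]
      simp only [Finset.sum_empty, add_zero]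
      rw [show ((((1:ℕ):ℤ) - 1) / 2) = 0 by norm_num]
      rw [← hc, hc00]
      norm_num
    have hn' : (n:ℤ) = 2*(t:ℤ) + 1 := by omega
    have hct : c ≤ (t:ℤ) := by omega
    have hfold1 : (∑ i ∈ range n, (i:ℤ)) = G n := rfl
    have hfold2 : (∑ i ∈ range n, (i:ℤ)^2) = Q n := rfl
    have hfold3 : (∑ i ∈ range (p+1), (i:ℤ)) = G (p+1) := rfl
    have hfold4 : (∑ i ∈ range ((t-1)+1), (i:ℤ)^2) = Q t := by
      rw [show (t-1)+1 = t by omega]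
    have hfold5 : (∑ i ∈ range (t+1), (i:ℤ)^2) = Q (t+1) := rfl
    rw [hfold1, hfold2, hfold3] at hBsq
    have hGn : G n = 2*(t:ℤ)^2 + (t:ℤ) := by
      have h := gsum n; rw [hfold1, hn'] at h; linarith
    have hQn : 6 * Q n = (2*(t:ℤ)+1) * (2*(t:ℤ)) * (4*(t:ℤ)+1) := by
      have h := qsum n; rw [hfold2, hn'] at h; linarith
    have hQt : 6 * Q t = (t:ℤ) * ((t:ℤ)-1) * (2*(t:ℤ)-1) := by
      have h := qsum t; exact h
    have hQt1 : 6 * Q (t+1) = ((t:ℤ)+1) * (t:ℤ) * (2*(t:ℤ)+1) := by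
      have h := qsum (t+1); rw [hfold5] at h; push_cast at h; linarith
    obtain ⟨hMm, hrr⟩ := divu (n:ℤ) M (t:ℤ) r c hnpos
      (by rw [hS, hSdef, hGn, hn']; ring) hr0 hrn hc0 (by omega)
    have hpz : (p:ℤ) = 2*(t:ℤ) - c := by rw [hp, hn', hrr]; ring
    have hgp : 2 * G (p+1) = (2*(t:ℤ)-c+1) * (2*(t:ℤ)-c) := by
      have h := gsum (p+1); push_cast at h; rw [hpz] at h
      rw [hfold3] at h; linarith
    rw [show (((n:ℤ)-1)/2) = (t:ℤ) by rw [hn']; omega,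
      show (-(((n:ℤ)-3)/2)) = (-(((t-1:ℕ)):ℤ)) by rw [hn']; omega]
    rw [iccneg (t-1) t, hfold4, hfold5]
    refine le_trans hmain ?_
    rw [hBsq, hMm, hpz, hn', hGn]
    linarith [hQn, hQt, hQt1, hgp]
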